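/- Let d ≥ 1, let K ⊆ ℝ^d be a convex, compact set contained in the nonnegative orthant that is down-closed with lower bound 0, and suppose there exists r > 0 with r·B^d_{≥0} ⊆ K. Let δ > 0 be small enough that α := (√d+1)δ/r < 1, and define K' := (1−α)·K + δ·𝟙, where 𝟙 is the all-ones vector. Then K' is convex, compact, and down-closed with lower bound δ·𝟙 (i.e., δ·𝟙 ∈ K', every y ∈ K' satisfies y ≥ δ·𝟙, and whenever δ·𝟙 ≤ x ≤ y with y ∈ K', also x ∈ K'). -/

import Mathlib

open Metric Set

/-- The all-ones vector in `ℝ^d`. -/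
def allOnes (d : ℕ) : EuclideanSpace ℝ (Fin d) := WithLp.toLp 2 (fun _ => 1)

/-- A set `P ⊆ ℝ^d` is down-closed with lower bound `u`: `u ∈ P`, every `y ∈ P`
satisfies `u ≤ y` coordinatewise, and whenever `u ≤ x ≤ y` with `y ∈ P`, also `x ∈ P`. -/
def DownClosedWithLB {d : ℕ} (u : EuclideanSpace ℝ (Fin d)) (P : Set (EuclideanSpace ℝ (Fin d))) :
    Prop :=
  u ∈ P ∧ (∀ y ∈ P, ∀ i, u i ≤ y i) ∧
    ∀ x y : EuclideanSpace ℝ (Fin d), y ∈ P → (∀ i, u i ≤ x i) → (∀ i, x i ≤ y i) → x ∈ P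

theorem shrunk_translated_set_is_convex_compact_downclosed
    (d : ℕ) (hd : 1 ≤ d) (K : Set (EuclideanSpace ℝ (Fin d)))
    (hconv : Convex ℝ K) (hcomp : IsCompact K)
    (hpos : K ⊆ {x | ∀ i, 0 ≤ x i})
    (hdown : DownClosedWithLB (0 : EuclideanSpace ℝ (Fin d)) K)
    (r : ℝ) (hr : 0 < r)
    (hrK : (fun x : EuclideanSpace ℝ (Fin d) => r • x) ''
        (closedBall (0 : EuclideanSpace ℝ (Fin d)) 1 ∩ {x | ∀ i, 0 ≤ x i}) ⊆ K)
    (δ : ℝ) (hδ : 0 < δ)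
    (α : ℝ) (hα : α = (Real.sqrt d + 1) * δ / r) (hα1 : α < 1)
    (K' : Set (EuclideanSpace ℝ (Fin d)))
    (hK' : K' = (fun x : EuclideanSpace ℝ (Fin d) => (1 - α) • x + δ • allOnes d) '' K) :
    Convex ℝ K' ∧ IsCompact K' ∧ DownClosedWithLB (δ • allOnes d) K' := by
  have h1α : (0:ℝ) < 1 - α := by linarith
  have hcoord : ∀ (v : EuclideanSpace ℝ (Fin d)) (i : Fin d),
      ((1 - α) • v + δ • allOnes d) i = (1 - α) * v i + δ * 1 := fun v i => rfl
  have hδco : ∀ i : Fin d, (δ • allOnes d) i = δ * 1 := fun i => rfl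
  subst hK'
  refine ⟨?_, ?_, ?_, ?_, ?_⟩
  · -- convexity
    rintro _ ⟨a, ha, rfl⟩ _ ⟨b, hb, rfl⟩ s t hs ht hst
    refine ⟨s • a + t • b, hconv ha hb hs ht hst, ?_⟩
    refine PiLp.ext fun i => ?_
    show (1 - α) * ((s • a + t • b : EuclideanSpace ℝ (Fin d)) i) + δ * 1 =
      s * ((1 - α) * a i + δ * 1) + t * ((1 - α) * b i + δ * 1)
    have hab : (s • a + t • b : EuclideanSpace ℝ (Fin d)) i = s * a i + t * b i := rfl
    rw [hab]
    linear_combination (-δ) * hst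
  · -- compactness
    exact hcomp.image ((continuous_const_smul _).add continuous_const)
  · -- δ𝟙 is a member
    exact ⟨0, hdown.1, by simp⟩
  · -- lower bound
    rintro _ ⟨z, hz, rfl⟩ i
    have hz0 : 0 ≤ z i := hpos hz i
    show (δ • allOnes d) i ≤ ((1 - α) • z + δ • allOnes d) i
    rw [hcoord, hδco]
    nlinarith
  · -- down-closed
    rintro x _ ⟨z, hz, rfl⟩ hx1 hx2
    set w : EuclideanSpace ℝ (Fin d) := WithLp.toLp 2 (fun i => (x i - δ) / (1 - α)) with hw
    have hwK : w ∈ K := by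
      refine hdown.2.2 w z hz (fun i => ?_) (fun i => ?_)
      · have h1 := hx1 i
        rw [hδco] at h1
        have : 0 ≤ x i - δ := by linarith
        show (0:ℝ) ≤ (x i - δ) / (1 - α)
        positivity
      · have h2 : x i ≤ ((1 - α) • z + δ • allOnes d) i := hx2 i
        rw [hcoord] at h2
        show (x i - δ) / (1 - α) ≤ z i
        rw [div_le_iff₀ h1α]
        linarith
    refine ⟨w, hwK, PiLp.ext fun i => ?_⟩
    show ((1 - α) • w + δ • allOnes d) i = x i
    rw [hcoord]
    show (1 - α) * ((x i - δ) / (1 - α)) + δ * 1 = x i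
    field_simp
    ring
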